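/- Let (X, T) be a weakly mixing minimal topological dynamical system and let M, M₀ be real numbers with M ≠ 0. Suppose p : ℤ → ℤ satisfies M n − M₀ < p(n) < M n + M₀ for all n ∈ ℤ. Then for any non-empty open subsets U, V of X, the set N(p, U, V) = {n ∈ ℤ : U ∩ T^{−p(n)}V ≠ ∅} is thickly syndetic. -/

import Mathlib

set_option maxHeartbeats 1000000

def Syndetic (S : Set ℤ) : Prop :=
  ∃ L : ℕ, ∀ n : ℤ, ∃ m ∈ S, n ≤ m ∧ m ≤ n + L

def ThicklySyndetic (S : Set ℤ) : Prop :=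
  ∀ L : ℕ, ∃ B : Set ℤ, Syndetic B ∧ ∀ b ∈ B, ∀ j : ℤ, 0 ≤ j → j ≤ (L : ℤ) → b + j ∈ S

def Thick (S : Set ℤ) : Prop :=
  ∀ L : ℕ, ∃ a : ℤ, ∀ j : ℤ, 0 ≤ j → j ≤ (L : ℤ) → a + j ∈ S

noncomputable def nint (a : ℝ) : ℤ := ⌊a + 1/2⌋

noncomputable def sfrac (a : ℝ) : ℝ := a - nint a

/-! ### Arithmetic transfer lemma -/

lemma preimage_ts (A : Set ℤ) (hA : ThicklySyndetic A) (M M₀ : ℝ) (hM : M ≠ 0)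
    (p : ℤ → ℤ) (hp : ∀ n : ℤ, M * n - M₀ < (p n : ℝ) ∧ (p n : ℝ) < M * n + M₀) :
    ThicklySyndetic (p ⁻¹' A) := by
  intro L
  have habs : (0:ℝ) < |M| := abs_pos.mpr hM
  set L' : ℕ := ⌈|M| * L + 2 * M₀ + 2 + |M|⌉₊ with hL'def
  have hL'ge : |M| * L + 2 * M₀ + 2 + |M| ≤ (L' : ℝ) := Nat.le_ceil _
  obtain ⟨B', hB'syn, hB'⟩ := hA L'
  obtain ⟨L₁, hL₁⟩ := hB'syn
  set K : ℕ := ⌈((L₁ : ℝ) + 1) / |M|⌉₊ with hKdef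
  have hKmul : (L₁ : ℝ) + 1 ≤ (K : ℝ) * |M| :=
    (div_le_iff₀ habs).mp (Nat.le_ceil _)
  refine ⟨{b : ℤ | ∀ j : ℤ, 0 ≤ j → j ≤ (L : ℤ) → p (b + j) ∈ A}, ⟨K + 1, ?_⟩,
    fun b hb j h0 hjL => hb j h0 hjL⟩
  intro n
  rcases hM.lt_or_gt with hMneg | hMpos
  · -- M < 0
    have habsM : |M| = -M := abs_of_neg hMneg
    rw [habsM] at hL'ge hKmul
    obtain ⟨b', hb'B, hb'lo, hb'hi⟩ := hL₁ (⌈M * n + M₀ - L'⌉ - L₁ - 1)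
    have hb'up : (b' : ℝ) < M * n + M₀ - L' := by
      have h1 : (b' : ℝ) ≤ ((⌈M * n + M₀ - L'⌉ - L₁ - 1 : ℤ) : ℝ) + L₁ := by
        exact_mod_cast hb'hi
      have h2 : ((⌈M * n + M₀ - L'⌉ : ℤ) : ℝ) < M * n + M₀ - L' + 1 :=
        Int.ceil_lt_add_one _
      push_cast at h1
      linarith
    have hb'low : M * n + M₀ - L' - L₁ - 1 ≤ (b' : ℝ) := by
      have h1 : ((⌈M * n + M₀ - L'⌉ - L₁ - 1 : ℤ) : ℝ) ≤ (b' : ℝ) := by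
        exact_mod_cast hb'lo
      have h2 : M * n + M₀ - (L' : ℝ) ≤ ((⌈M * n + M₀ - L'⌉ : ℤ) : ℝ) := Int.le_ceil _
      push_cast at h1
      linarith
    set b : ℤ := ⌈((b' : ℝ) + L' - M₀) / M⌉ with hbdef
    have hceil1 : ((b' : ℝ) + L' - M₀) / M ≤ (b : ℝ) := by
      rw [hbdef]; exact Int.le_ceil _
    have hceil2 : (b : ℝ) < ((b' : ℝ) + L' - M₀) / M + 1 := by
      rw [hbdef]; exact Int.ceil_lt_add_one _
    have hA1 : (b : ℝ) * M ≤ (b' : ℝ) + L' - M₀ :=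
      (div_le_iff_of_neg hMneg).mp hceil1
    have hA2 : (b' : ℝ) + L' - M₀ < (b : ℝ) * M - M := by
      have h2 : (b : ℝ) - 1 < ((b' : ℝ) + L' - M₀) / M := by linarith
      have h3 := (lt_div_iff_of_neg hMneg).mp h2
      nlinarith
    have hnb : n ≤ b := by
      have h1 : (n : ℝ) ≤ ((b' : ℝ) + L' - M₀) / M := by
        rw [le_div_iff_of_neg hMneg]
        nlinarith
      have h2 : (n : ℝ) ≤ (b : ℝ) := le_trans h1 hceil1
      exact_mod_cast h2
    have hble : b ≤ n + ((K : ℤ) + 1) := by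
      have h1 : ((b' : ℝ) + L' - M₀) / M ≤ (n : ℝ) + K := by
        rw [div_le_iff_of_neg hMneg]
        nlinarith
      have h2 : (b : ℝ) < (n : ℝ) + K + 1 := by linarith
      have h3 : (b : ℝ) ≤ ((n + ((K : ℤ) + 1) : ℤ) : ℝ) := by push_cast; linarith
      exact_mod_cast h3
    refine ⟨b, ?_, hnb, by exact_mod_cast hble⟩
    intro j hj0 hjL
    obtain ⟨hp1, hp2⟩ := hp (b + j)
    have hcast : ((b + j : ℤ) : ℝ) = (b : ℝ) + j := by push_cast; ring
    rw [hcast] at hp1 hp2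
    have hj0R : (0:ℝ) ≤ j := by exact_mod_cast hj0
    have hjLR : (j : ℝ) ≤ L := by exact_mod_cast hjL
    have hMj0 : M * j ≤ 0 := by nlinarith
    have hMjL : M * L ≤ M * j := by nlinarith
    have hexp : M * ((b : ℝ) + j) = (b : ℝ) * M + M * j := by ring
    have hlow : (b' : ℝ) < ((p (b + j)) : ℝ) := by nlinarith
    have hhigh : ((p (b + j)) : ℝ) < (b' : ℝ) + L' := by nlinarith
    have hlowZ : b' < p (b + j) := by exact_mod_cast hlow
    have hhighZ : p (b + j) < b' + (L' : ℤ) := by exact_mod_cast hhigh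
    have hmem := hB' b' hb'B (p (b + j) - b') (by omega) (by omega)
    rwa [show b' + (p (b + j) - b') = p (b + j) by ring] at hmem
  · -- M > 0
    have habsM : |M| = M := abs_of_pos hMpos
    rw [habsM] at hL'ge hKmul
    obtain ⟨b', hb'B, hb'lo, hb'hi⟩ := hL₁ ⌈M * n - M₀⌉
    have hA3 : M * n - M₀ ≤ (b' : ℝ) := by
      have h1 : M * n - M₀ ≤ ((⌈M * n - M₀⌉ : ℤ) : ℝ) := Int.le_ceil _
      have h2 : ((⌈M * n - M₀⌉ : ℤ) : ℝ) ≤ (b' : ℝ) := by exact_mod_cast hb'lo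
      linarith
    have hA4 : (b' : ℝ) ≤ M * n - M₀ + 1 + L₁ := by
      have h1 : (b' : ℝ) ≤ ((⌈M * n - M₀⌉ : ℤ) : ℝ) + L₁ := by exact_mod_cast hb'hi
      have h2 : ((⌈M * n - M₀⌉ : ℤ) : ℝ) < M * n - M₀ + 1 := Int.ceil_lt_add_one _
      linarith
    set b : ℤ := ⌈((b' : ℝ) + M₀) / M⌉ with hbdef
    have hceil1 : ((b' : ℝ) + M₀) / M ≤ (b : ℝ) := by
      rw [hbdef]; exact Int.le_ceil _
    have hceil2 : (b : ℝ) < ((b' : ℝ) + M₀) / M + 1 := by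
      rw [hbdef]; exact Int.ceil_lt_add_one _
    have hA1 : (b' : ℝ) + M₀ ≤ (b : ℝ) * M := (div_le_iff₀ hMpos).mp hceil1
    have hA2 : (b : ℝ) * M < (b' : ℝ) + M₀ + M := by
      have h2 : (b : ℝ) - 1 < ((b' : ℝ) + M₀) / M := by linarith
      have h3 := (lt_div_iff₀ hMpos).mp h2
      nlinarith
    have hnb : n ≤ b := by
      have h1 : (n : ℝ) * M ≤ (b : ℝ) * M := by nlinarith
      have h2 := le_of_mul_le_mul_right h1 hMpos
      exact_mod_cast h2
    have hble : b ≤ n + ((K : ℤ) + 1) := by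
      have h1 : (b : ℝ) * M < ((n : ℝ) + K + 1) * M := by nlinarith
      have h2 := lt_of_mul_lt_mul_right h1 hMpos.le
      have h3 : (b : ℝ) ≤ ((n + ((K : ℤ) + 1) : ℤ) : ℝ) := by push_cast; linarith
      exact_mod_cast h3
    refine ⟨b, ?_, hnb, by exact_mod_cast hble⟩
    intro j hj0 hjL
    obtain ⟨hp1, hp2⟩ := hp (b + j)
    have hcast : ((b + j : ℤ) : ℝ) = (b : ℝ) + j := by push_cast; ring
    rw [hcast] at hp1 hp2
    have hj0R : (0:ℝ) ≤ j := by exact_mod_cast hj0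
    have hjLR : (j : ℝ) ≤ L := by exact_mod_cast hjL
    have hMj0 : 0 ≤ M * j := mul_nonneg hMpos.le hj0R
    have hMjL : M * j ≤ M * L := mul_le_mul_of_nonneg_left hjLR hMpos.le
    have hexp : M * ((b : ℝ) + j) = (b : ℝ) * M + M * j := by ring
    have hlow : (b' : ℝ) < ((p (b + j)) : ℝ) := by nlinarith
    have hhigh : ((p (b + j)) : ℝ) < (b' : ℝ) + L' := by nlinarith
    have hlowZ : b' < p (b + j) := by exact_mod_cast hlow
    have hhighZ : p (b + j) < b' + (L' : ℤ) := by exact_mod_cast hhigh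
    have hmem := hB' b' hb'B (p (b + j) - b') (by omega) (by omega)
    rwa [show b' + (p (b + j) - b') = p (b + j) by ring] at hmem

/-! ### Dynamical lemmas -/

set_option linter.unusedSectionVars false

section Dyn
variable {X : Type*} [MetricSpace X] [CompactSpace X]

/-- The set of return times `N(U,V)` for the iterate family `T^n`. -/
def Np (T : X ≃ₜ X) (U V : Set X) : Set ℤ :=
  {n | (U ∩ (fun x => (T.toEquiv ^ n) x) ⁻¹' V).Nonempty}

lemma cont_zpow (T : X ≃ₜ X) (n : ℤ) : Continuous fun x => (T.toEquiv ^ n) x := by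
  induction n using Int.induction_on with
  | zero => simpa using continuous_id'
  | succ k ih =>
      have h : (fun x => (T.toEquiv ^ ((k : ℤ) + 1)) x)
          = (fun x => (T.toEquiv ^ (k : ℤ)) x) ∘ T := by
        funext x; rw [zpow_add_one]; rfl
      rw [h]; exact ih.comp T.continuous
  | pred k ih =>
      have h : (fun x => (T.toEquiv ^ (-(k : ℤ) - 1)) x)
          = (fun x => (T.toEquiv ^ (-(k : ℤ))) x) ∘ T.symm := by
        funext x; rw [zpow_sub_one]; rfl
      rw [h]; exact ih.comp T.symm.continuous

lemma zpow_apply_add (T : X ≃ₜ X) (m k : ℤ) (x : X) :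
    (T.toEquiv ^ m) ((T.toEquiv ^ k) x) = (T.toEquiv ^ (m + k)) x := by
  rw [zpow_add]; rfl

/-- Minimality: `N(U,V)` is syndetic. -/
lemma syndetic_Np (T : X ≃ₜ X)
    (hmin : ∀ x : X, Dense {y : X | ∃ n : ℤ, y = (T.toEquiv ^ n) x})
    {U V : Set X} (hV : IsOpen V) (hUne : U.Nonempty) (hVne : V.Nonempty) :
    Syndetic (Np T U V) := by
  obtain ⟨x₀, hx₀⟩ := hUne
  have hcover : (Set.univ : Set X) ⊆ ⋃ n : ℤ, (fun x => (T.toEquiv ^ n) x) ⁻¹' V := by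
    intro x _
    obtain ⟨y, ⟨n, rfl⟩, hyV⟩ := (hmin x).exists_mem_open hV hVne
    exact Set.mem_iUnion.mpr ⟨n, hyV⟩
  obtain ⟨t, ht⟩ := isCompact_univ.elim_finite_subcover _
    (fun n : ℤ => (cont_zpow T n).isOpen_preimage V hV) hcover
  have hmem : ∀ x : X, ∃ k ∈ t, (T.toEquiv ^ k) x ∈ V := by
    intro x
    have := ht (Set.mem_univ x)
    simpa using this
  obtain ⟨k₀, hk₀, _⟩ := hmem x₀
  have htne : t.Nonempty := ⟨k₀, hk₀⟩
  set a := t.min' htne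
  set b := t.max' htne
  refine ⟨(b - a).toNat, ?_⟩
  intro n
  obtain ⟨k, hk, hkV⟩ := hmem ((T.toEquiv ^ (n - a)) x₀)
  rw [zpow_apply_add] at hkV
  refine ⟨k + (n - a), ⟨x₀, hx₀, hkV⟩, ?_, ?_⟩
  · have := t.min'_le k hk
    omega
  · have h1 := t.le_max' k hk
    have h2 : a ≤ b := t.min'_le b (t.max'_mem htne)
    have h3 : ((b - a).toNat : ℤ) = b - a := Int.toNat_of_nonneg (by omega)
    omega

/-- Weak mixing: the family of return-time sets is a filter base. -/
lemma filter_Np (T : X ≃ₜ X)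
    (hwm : ∀ U V : Set (X × X), IsOpen U → IsOpen V → U.Nonempty → V.Nonempty →
      ∃ n : ℤ, (U ∩ (fun q => ((T.toEquiv ^ n) q.1, (T.toEquiv ^ n) q.2)) ⁻¹' V).Nonempty)
    {U₁ V₁ U₂ V₂ : Set X} (hU₁ : IsOpen U₁) (hV₁ : IsOpen V₁) (hU₂ : IsOpen U₂)
    (hV₂ : IsOpen V₂) (hU₁n : U₁.Nonempty) (hV₁n : V₁.Nonempty) (hU₂n : U₂.Nonempty)
    (hV₂n : V₂.Nonempty) :
    ∃ U' V' : Set X, IsOpen U' ∧ IsOpen V' ∧ U'.Nonempty ∧ V'.Nonempty ∧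
      Np T U' V' ⊆ Np T U₁ V₁ ∩ Np T U₂ V₂ := by
  obtain ⟨m, ⟨⟨u, v⟩, h1, h2⟩⟩ := hwm (U₁ ×ˢ V₁) (U₂ ×ˢ V₂) (hU₁.prod hV₁) (hU₂.prod hV₂)
    (hU₁n.prod hV₁n) (hU₂n.prod hV₂n)
  obtain ⟨hu₁, hv₁⟩ := h1
  obtain ⟨hu₂, hv₂⟩ := h2
  refine ⟨U₁ ∩ (fun x => (T.toEquiv ^ m) x) ⁻¹' U₂,
          V₁ ∩ (fun x => (T.toEquiv ^ m) x) ⁻¹' V₂,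
          hU₁.inter ((cont_zpow T m).isOpen_preimage _ hU₂),
          hV₁.inter ((cont_zpow T m).isOpen_preimage _ hV₂),
          ⟨u, hu₁, hu₂⟩, ⟨v, hv₁, hv₂⟩, ?_⟩
  rintro k ⟨x, ⟨hx₁, hx₂⟩, hxk₁, hxk₂⟩
  constructor
  · exact ⟨x, hx₁, hxk₁⟩
  · refine ⟨(T.toEquiv ^ m) x, hx₂, ?_⟩
    show (T.toEquiv ^ k) ((T.toEquiv ^ m) x) ∈ V₂
    rw [zpow_apply_add, add_comm, ← zpow_apply_add]
    exact hxk₂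

lemma iter_Np (T : X ≃ₜ X)
    (hwm : ∀ U V : Set (X × X), IsOpen U → IsOpen V → U.Nonempty → V.Nonempty →
      ∃ n : ℤ, (U ∩ (fun q => ((T.toEquiv ^ n) q.1, (T.toEquiv ^ n) q.2)) ⁻¹' V).Nonempty)
    {U V : Set X} (hU : IsOpen U) (hV : IsOpen V) (hUne : U.Nonempty) (hVne : V.Nonempty)
    (L : ℕ) :
    ∃ U' V' : Set X, IsOpen U' ∧ IsOpen V' ∧ U'.Nonempty ∧ V'.Nonempty ∧
      ∀ k ∈ Np T U' V', ∀ j : ℤ, 0 ≤ j → j ≤ (L : ℤ) → k + j ∈ Np T U V := by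
  induction L with
  | zero =>
      refine ⟨U, V, hU, hV, hUne, hVne, ?_⟩
      intro k hk j h0 hL
      have : j = 0 := by omega
      simpa [this] using hk
  | succ L ih =>
      obtain ⟨U₁, V₁, hU₁, hV₁, hU₁n, hV₁n, hprop⟩ := ih
      set s : ℤ := (L : ℤ) + 1 with hs
      have hVs : IsOpen ((fun x => (T.toEquiv ^ s) x) ⁻¹' V) :=
        (cont_zpow T s).isOpen_preimage _ hV
      have hVsn : ((fun x => (T.toEquiv ^ s) x) ⁻¹' V).Nonempty := by
        obtain ⟨v0, hv0⟩ := hVne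
        exact ⟨(T.toEquiv ^ s).symm v0, by simp [hv0]⟩
      obtain ⟨U', V', hU', hV', hU'n, hV'n, hsub⟩ :=
        filter_Np T hwm hU₁ hV₁ hU hVs hU₁n hV₁n hUne hVsn
      refine ⟨U', V', hU', hV', hU'n, hV'n, ?_⟩
      intro k hk j h0 hL
      have hk12 := hsub hk
      rcases lt_or_eq_of_le hL with hlt | heq
      · exact hprop k hk12.1 j h0 (by push_cast at hlt ⊢; omega)
      · obtain ⟨x, hxU, hxV⟩ := hk12.2
        refine ⟨x, hxU, ?_⟩
        show (T.toEquiv ^ (k + j)) x ∈ V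
        have hxV' : (T.toEquiv ^ s) ((T.toEquiv ^ k) x) ∈ V := hxV
        rw [zpow_apply_add] at hxV'
        have hj : s + k = k + j := by push_cast at heq; omega
        rwa [hj] at hxV'

/-- Huang–Ye: for a weakly mixing minimal system, `N(U,V)` is thickly syndetic. -/
lemma ts_Np (T : X ≃ₜ X)
    (hmin : ∀ x : X, Dense {y : X | ∃ n : ℤ, y = (T.toEquiv ^ n) x})
    (hwm : ∀ U V : Set (X × X), IsOpen U → IsOpen V → U.Nonempty → V.Nonempty →
      ∃ n : ℤ, (U ∩ (fun q => ((T.toEquiv ^ n) q.1, (T.toEquiv ^ n) q.2)) ⁻¹' V).Nonempty)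
    {U V : Set X} (hU : IsOpen U) (hV : IsOpen V) (hUne : U.Nonempty) (hVne : V.Nonempty) :
    ThicklySyndetic (Np T U V) := by
  intro L
  obtain ⟨U', V', hU', hV', hU'n, hV'n, hprop⟩ := iter_Np T hwm hU hV hUne hVne L
  exact ⟨Np T U' V', syndetic_Np T hmin hV' hU'n hV'n, hprop⟩

end Dyn

theorem N_p_thickly_syndetic {X : Type*} [MetricSpace X] [CompactSpace X]
    (T : X ≃ₜ X)
    (hmin : ∀ x : X, Dense {y : X | ∃ n : ℤ, y = (T.toEquiv ^ n) x})
    (hwm : ∀ U V : Set (X × X), IsOpen U → IsOpen V → U.Nonempty → V.Nonempty →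
      ∃ n : ℤ, (U ∩ (fun q => ((T.toEquiv ^ n) q.1, (T.toEquiv ^ n) q.2)) ⁻¹' V).Nonempty)
    (M M₀ : ℝ) (hM : M ≠ 0) (p : ℤ → ℤ)
    (hp : ∀ n : ℤ, M * n - M₀ < (p n : ℝ) ∧ (p n : ℝ) < M * n + M₀)
    (U V : Set X) (hU : IsOpen U) (hV : IsOpen V)
    (hUne : U.Nonempty) (hVne : V.Nonempty) :
    ThicklySyndetic {n : ℤ | (U ∩ (fun x => (T.toEquiv ^ (p n)) x) ⁻¹' V).Nonempty} := by
  have h := preimage_ts (Np T U V) (ts_Np T hmin hwm hU hV hUne hVne) M M₀ hM p hp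
  exact h
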